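/- Let G be a group, h ∈ G, and x = [h] the conjugacy class of h. The induced map ϑ̄_h : E_•(G) ⊗_{ℂZ_h} ℂ → C_•(ℂG)_x, from ϑ_h(g_0,...,g_n) = (g_n⁻¹ h g_0, g_0⁻¹g_1,...,g_{n-1}⁻¹g_n), is a well-defined ℂ-linear isomorphism: ϑ_h factors through Z_h-coinvariants, and the induced map on coinvariants is bijective. -/

import Mathlib

/-- `ϑ_h(g_0,...,g_n) = (g_n⁻¹ h g_0, g_0⁻¹ g_1, ..., g_{n-1}⁻¹ g_n)`. -/
def thetaMap {G : Type*} [Group G] (h : G) (l : List G) : List G :=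
  ((l.getLastD 1)⁻¹ * h * l.headD 1) :: List.zipWith (fun a b => a⁻¹ * b) l.dropLast l.tail

/-- The linear extension `Θ` of `ϑ_h` to `E_•(G)`. -/
noncomputable def Theta {G : Type*} [Group G] (h : G) :
    (List G →₀ ℂ) →ₗ[ℂ] (List G →₀ ℂ) :=
  Finsupp.lift (List G →₀ ℂ) ℂ (List G) (fun l => Finsupp.single (thetaMap h l) 1)

namespace St16
variable {G : Type*} [Group G]

lemma scanl_mul_map (a g0 : G) (t : List G) :
    List.scanl (· * ·) (a * g0) t = (List.scanl (· * ·) g0 t).map (fun x => a * x) := by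
  induction t generalizing g0 with
  | nil => simp
  | cons k t ih => simp [List.scanl_cons, mul_assoc, ih]

lemma headD_scanl (g0 d : G) (t : List G) :
    (List.scanl (· * ·) g0 t).headD d = g0 := by
  cases t <;> simp [List.scanl_cons]

lemma getLastD_scanl (g0 : G) (t : List G) :
    ∀ d, (List.scanl (· * ·) g0 t).getLastD d = g0 * t.prod := by
  induction t generalizing g0 with
  | nil => simp
  | cons k t ih =>
    intro d
    rw [List.scanl_cons, List.getLastD_cons, ih, List.prod_cons,
      mul_assoc]

lemma scanl_recover (l : List G) (hl : l ≠ []) :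
    List.scanl (· * ·) (l.headD 1)
      (List.zipWith (fun a b => a⁻¹ * b) l.dropLast l.tail) = l := by
  induction l with
  | nil => simp at hl
  | cons x t ih =>
    cases t with
    | nil => simp
    | cons y t' =>
      have h2 := ih (by simp)
      simp only [List.headD_cons] at h2 ⊢
      rw [List.dropLast_cons₂, List.tail_cons]
      cases t' with
      | nil => simp
      | cons z t'' =>
        simp only [List.dropLast_cons₂, List.tail_cons] at h2 ⊢
        rw [List.zipWith_cons_cons, List.scanl_cons]
        congr 1
        rw [show x * (x⁻¹ * y) = y by group]
        exact h2

lemma zipWith_scanl (g0 : G) (t : List G) :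
    List.zipWith (fun a b => a⁻¹ * b) (List.scanl (· * ·) g0 t).dropLast
      (List.scanl (· * ·) g0 t).tail = t := by
  induction t generalizing g0 with
  | nil => simp
  | cons k t ih =>
    cases t with
    | nil => simp
    | cons k2 t2 =>
      have h2 := ih (g0 * k)
      simp only [List.scanl_cons, List.singleton_append] at h2 ⊢
      rw [List.dropLast_cons₂, List.tail_cons, List.zipWith_cons_cons]
      rw [List.tail_cons] at h2
      rw [h2, show g0⁻¹ * (g0 * k) = k by group]

lemma thetaMap_scanl (h g0 : G) (t : List G) :
    thetaMap h (List.scanl (· * ·) g0 t) = ((g0 * t.prod)⁻¹ * h * g0) :: t := by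
  unfold thetaMap
  rw [zipWith_scanl, headD_scanl, getLastD_scanl]

lemma length_thetaMap (h : G) (l : List G) (hl : l ≠ []) :
    (thetaMap h l).length = l.length := by
  unfold thetaMap
  rcases List.exists_cons_of_ne_nil hl with ⟨x, t, rfl⟩
  simp [List.length_zipWith]

lemma theta_invariant (h a : G) (hc : a * h = h * a) (l : List G) :
    thetaMap h (l.map (fun x => a * x)) = thetaMap h l := by
  rcases eq_or_ne l [] with rfl | hl
  · simp
  have hrec := scanl_recover l hl
  have key2 : ∀ g : G, a⁻¹ * (h * (a * g)) = h * g := by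
    intro g
    rw [← mul_assoc, ← mul_assoc, mul_assoc a⁻¹ h a, ← hc]
    group
  conv_lhs => rw [← hrec]
  conv_rhs => rw [← hrec]
  rw [← scanl_mul_map, thetaMap_scanl, thetaMap_scanl]
  congr 1
  simp [mul_inv_rev, mul_assoc, key2]


lemma prod_thetaMap (h : G) (l : List G) (hl : l ≠ []) :
    (thetaMap h l).prod = (l.getLastD 1)⁻¹ * h * l.getLastD 1 := by
  have hrec := scanl_recover l hl
  have hlast := getLastD_scanl (l.headD 1)
    (List.zipWith (fun a b => a⁻¹ * b) l.dropLast l.tail) 1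
  rw [hrec] at hlast
  unfold thetaMap
  rw [List.prod_cons]
  have hp : (List.zipWith (fun a b => a⁻¹ * b) l.dropLast l.tail).prod
      = (l.headD 1)⁻¹ * l.getLastD 1 := by
    rw [hlast]; group
  rw [hp]
  group

lemma theta_fiber (h : G) (l l' : List G) (hl : l ≠ []) (hl' : l' ≠ [])
    (heq : thetaMap h l = thetaMap h l') :
    ∃ a : G, a * h = h * a ∧ l' = l.map (fun x => a * x) := by
  set g0 := l.headD 1 with hg0
  set g0' := l'.headD 1 with hg0'
  have hrec := scanl_recover l hl
  have hrec' := scanl_recover l' hl'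
  set T := List.zipWith (fun a b => a⁻¹ * b) l.dropLast l.tail with hT
  set T' := List.zipWith (fun a b => a⁻¹ * b) l'.dropLast l'.tail with hT'
  have h1 : thetaMap h l = ((g0 * T.prod)⁻¹ * h * g0) :: T := by
    conv_lhs => rw [← hrec]
    rw [thetaMap_scanl]
  have h1' : thetaMap h l' = ((g0' * T'.prod)⁻¹ * h * g0') :: T' := by
    conv_lhs => rw [← hrec']
    rw [thetaMap_scanl]
  rw [h1, h1'] at heq
  have hTT : T = T' := by simpa using congrArg List.tail heq
  have hhead : (g0 * T.prod)⁻¹ * h * g0 = (g0' * T'.prod)⁻¹ * h * g0' := by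
    simpa using congrArg (List.headD · 1) heq
  rw [← hTT] at hhead h1' hrec'
  have hkey : g0⁻¹ * h * g0 = g0'⁻¹ * h * g0' := by
    have := congrArg (fun x => T.prod * x) hhead
    simpa [mul_inv_rev, mul_assoc] using this
  refine ⟨g0' * g0⁻¹, ?_, ?_⟩
  · have : g0' * (g0⁻¹ * h * g0) * g0'⁻¹ = h := by rw [hkey]; group
    calc g0' * g0⁻¹ * h = (g0' * (g0⁻¹ * h * g0) * g0'⁻¹) * (g0' * g0⁻¹) := by group
    _ = h * (g0' * g0⁻¹) := by rw [this]
  · conv_lhs => rw [← hrec']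
    conv_rhs => rw [← hrec]
    rw [← scanl_mul_map]
    congr 1
    simp [hg0, hg0']

open scoped Classical in
noncomputable def rep (h : G) (m : List G) : List G :=
  if hc : IsConj h m.prod then
    List.scanl (· * ·) ((isConj_iff.mp hc).choose⁻¹ * m.headD 1) m.tail
  else m

lemma thetaMap_rep (h : G) (m : List G) (hm : m ≠ []) (hc : IsConj h m.prod) :
    thetaMap h (rep h m) = m := by
  rcases List.exists_cons_of_ne_nil hm with ⟨k, t, rfl⟩
  rw [rep, dif_pos hc]
  have hr := (isConj_iff.mp hc).choose_spec
  set r := (isConj_iff.mp hc).choose with hrdef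
  rw [List.headD_cons, List.tail_cons, thetaMap_scanl]
  congr 1
  rw [List.prod_cons] at hr
  have h1 : r⁻¹ * k * t.prod = h * r⁻¹ := by
    rw [mul_assoc, ← hr]
    group
  rw [h1]
  group

lemma length_rep (h : G) (m : List G) (hm : m ≠ []) (hc : IsConj h m.prod) :
    (rep h m).length = m.length := by
  have h1 : rep h m ≠ [] := by
    rw [rep, dif_pos hc]
    cases m.tail <;> simp [List.scanl_cons]
  have := length_thetaMap h (rep h m) h1
  rw [thetaMap_rep h m hm hc] at this
  omega

lemma Theta_single (h : G) (l : List G) (c : ℂ) :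
    Theta h (Finsupp.single l c) = Finsupp.single (thetaMap h l) c := by
  rw [Theta, Finsupp.lift_apply, Finsupp.sum_single_index] <;>
    simp [Finsupp.smul_single]

lemma Theta_eq_mapDomain (h : G) (f : List G →₀ ℂ) :
    Theta h f = Finsupp.mapDomain (thetaMap h) f := by
  induction f using Finsupp.induction_linear with
  | zero => simp
  | add f g hf hg => rw [map_add, Finsupp.mapDomain_add, hf, hg]
  | single a b => rw [Theta_single, Finsupp.mapDomain_single]

end St16

/-- `ϑ_h` induces a well-defined ℂ-linear isomorphism
`E_n(G) ⊗_{ℂZ_h} ℂ ≅ C_n(ℂG)_{[h]}`: it is invariant under the diagonal `Z_h`-action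
(hence factors through coinvariants), its image on `E_n(G)` is exactly `C_n(ℂG)_{[h]}`
(surjectivity of the induced map), and its kernel on `E_n(G)` is exactly the span of the
elements `a·c − c` (injectivity of the induced map on coinvariants). -/
theorem statement16 {G : Type*} [Group G] (h : G) (n : ℕ) :
    (∀ a : G, a * h = h * a → ∀ l : List G,
      thetaMap h (l.map (fun x => a * x)) = thetaMap h l) ∧
    Submodule.map (Theta h)
        (Submodule.span ℂ {f : List G →₀ ℂ |
          ∃ l : List G, l.length = n + 1 ∧ f = Finsupp.single l 1})
      = Submodule.span ℂ {f : List G →₀ ℂ |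
          ∃ l : List G, l.length = n + 1 ∧ IsConj h l.prod ∧ f = Finsupp.single l 1} ∧
    (Submodule.span ℂ {f : List G →₀ ℂ |
        ∃ l : List G, l.length = n + 1 ∧ f = Finsupp.single l 1})
      ⊓ LinearMap.ker (Theta h)
      = Submodule.span ℂ {f : List G →₀ ℂ |
          ∃ (a : G) (l : List G), a * h = h * a ∧ l.length = n + 1 ∧
            f = Finsupp.single (l.map (fun x => a * x)) 1 - Finsupp.single l 1} := by

  classical
  set S : Set (List G) := {l | l.length = n + 1} with hS
  have hset : {f : List G →₀ ℂ | ∃ l : List G, l.length = n + 1 ∧ f = Finsupp.single l 1}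
      = (fun l : List G => Finsupp.single l (1 : ℂ)) '' S := by
    ext f
    constructor
    · rintro ⟨l, hl, rfl⟩; exact ⟨l, hl, rfl⟩
    · rintro ⟨l, hl, rfl⟩; exact ⟨l, hl, rfl⟩
  have hne : ∀ l : List G, l.length = n + 1 → l ≠ [] := by
    intro l hl hnil; rw [hnil] at hl; simp at hl
  have hconj : ∀ l : List G, l ≠ [] → IsConj h (thetaMap h l).prod := by
    intro l hl
    rw [St16.prod_thetaMap h l hl]
    exact isConj_iff.mpr ⟨(l.getLastD 1)⁻¹, by group⟩
  refine ⟨fun a hc l => St16.theta_invariant h a hc l, ?_, ?_⟩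
  · -- image statement
    rw [hset, ← Finsupp.supported_eq_span_single, Finsupp.supported_eq_span_single,
      Submodule.map_span]
    apply le_antisymm
    · rw [Submodule.span_le]
      rintro f ⟨g, ⟨l, hl, rfl⟩, rfl⟩
      apply Submodule.subset_span
      rw [St16.Theta_single]
      exact ⟨thetaMap h l, by rw [St16.length_thetaMap h l (hne l hl)]; exact hl,
        hconj l (hne l hl), rfl⟩
    · rw [Submodule.span_le]
      rintro f ⟨m, hm, hc, rfl⟩
      have hmne : m ≠ [] := hne m hm
      have h1 : Theta h (Finsupp.single (St16.rep h m) 1) = Finsupp.single m 1 := by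
        rw [St16.Theta_single, St16.thetaMap_rep h m hmne hc]
      rw [← h1]
      exact Submodule.subset_span ⟨Finsupp.single (St16.rep h m) 1,
        ⟨St16.rep h m,
          by rw [hS]; simp only [Set.mem_setOf_eq]; rw [St16.length_rep h m hmne hc]; exact hm,
          rfl⟩, rfl⟩
  · -- kernel statement
    apply le_antisymm
    · intro f hf
      rw [Submodule.mem_inf] at hf
      obtain ⟨hf1, hf2⟩ := hf
      have hsupp : ↑f.support ⊆ S := by
        rw [hset, ← Finsupp.supported_eq_span_single] at hf1
        exact Finsupp.mem_supported _ f |>.mp hf1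
      have hker : Theta h f = 0 := LinearMap.mem_ker.mp hf2
      set ρ : List G → List G := fun l => St16.rep h (thetaMap h l) with hρ
      have key : ∀ l ∈ S, ∃ a : G, a * h = h * a ∧ (ρ l).length = n + 1 ∧
          l = (ρ l).map (fun x => a * x) := by
        intro l hl
        have hlne : l ≠ [] := hne l hl
        have hθne : thetaMap h l ≠ [] := by rw [thetaMap]; exact List.cons_ne_nil _ _
        have hθc : IsConj h (thetaMap h l).prod := hconj l hlne
        have hrt : thetaMap h (ρ l) = thetaMap h l := St16.thetaMap_rep h _ hθne hθc
        have hρlen : (ρ l).length = n + 1 := by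
          rw [hρ]
          rw [St16.length_rep h _ hθne hθc, St16.length_thetaMap h l hlne]
          exact hl
        obtain ⟨a, hah, hmap⟩ := St16.theta_fiber h (ρ l) l (hne _ hρlen) hlne hrt
        exact ⟨a, hah, hρlen, hmap⟩
      have claim2 : ∀ g : List G →₀ ℂ, ↑g.support ⊆ S →
          g - Finsupp.mapDomain ρ g ∈ Submodule.span ℂ {f : List G →₀ ℂ |
            ∃ (a : G) (l : List G), a * h = h * a ∧ l.length = n + 1 ∧
              f = Finsupp.single (l.map (fun x => a * x)) 1 - Finsupp.single l 1} := by
        intro g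
        induction g using Finsupp.induction with
        | zero => intro _; simp
        | single_add a b g ha hb ih =>
          intro hsup
          rw [Finsupp.support_add_eq (by
            rw [Finsupp.support_single_ne_zero _ hb]
            simpa using ha)] at hsup
          rw [Finsupp.support_single_ne_zero _ hb] at hsup
          simp only [Finset.coe_union, Finset.coe_singleton, Set.union_subset_iff,
            Set.singleton_subset_iff] at hsup
          have haS : a ∈ S := hsup.1
          obtain ⟨c, hch, hclen, hcmap⟩ := key a haS
          have heq : Finsupp.single a b + g - Finsupp.mapDomain ρ (Finsupp.single a b + g)
              = (Finsupp.single a b - Finsupp.single (ρ a) b)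
                + (g - Finsupp.mapDomain ρ g) := by
            rw [Finsupp.mapDomain_add, Finsupp.mapDomain_single]
            abel
          rw [heq]
          refine add_mem ?_ (ih hsup.2)
          have hgen : Finsupp.single a b - Finsupp.single (ρ a) b
              = b • (Finsupp.single (((ρ a)).map (fun x => c * x)) (1 : ℂ)
                - Finsupp.single (ρ a) 1) := by
            rw [smul_sub, Finsupp.smul_single, Finsupp.smul_single, smul_eq_mul, mul_one,
              ← hcmap]
          rw [hgen]
          exact Submodule.smul_mem _ _ (Submodule.subset_span ⟨c, ρ a, hch, hclen, rfl⟩)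
      have hmd : Finsupp.mapDomain ρ f = 0 := by
        have hcomp : ρ = St16.rep h ∘ thetaMap h := rfl
        rw [hcomp, Finsupp.mapDomain_comp, ← St16.Theta_eq_mapDomain, hker,
          Finsupp.mapDomain_zero]
      have := claim2 f hsupp
      rwa [hmd, sub_zero] at this
    · rw [Submodule.span_le]
      rintro f ⟨a, l, hch, hlen, rfl⟩
      constructor
      · exact sub_mem
          (Submodule.subset_span ⟨l.map (fun x => a * x), by simpa using hlen, rfl⟩)
          (Submodule.subset_span ⟨l, hlen, rfl⟩)
      · rw [SetLike.mem_coe, LinearMap.mem_ker, map_sub, St16.Theta_single,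
          St16.Theta_single, St16.theta_invariant h a hch l, sub_self]
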